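/- Let Y, U, W ∈ V with Y ≠ 0. Then the fundamental tensor of the Matsumoto metric satisfies g_Y(U,W) = (√⟨Y,Y⟩ − ⟨X,Y⟩)^{-2}·{4⟨Y,U⟩⟨Y,W⟩ + 2⟨Y,Y⟩⟨U,W⟩} + (√⟨Y,Y⟩ − ⟨X,Y⟩)^{-4}·{ −4⟨Y,Y⟩⟨Y,U⟩⟨Y,W⟩ + ⟨Y,Y⟩^{3/2}(⟨Y,W⟩⟨U,X⟩ + ⟨Y,U⟩⟨W,X⟩) + ⟨Y,Y⟩²(3⟨U,X⟩⟨W,X⟩ − ⟨U,W⟩) + √⟨Y,Y⟩·⟨Y,X⟩(7⟨Y,U⟩⟨Y,W⟩ + ⟨Y,Y⟩⟨U,W⟩) − 4⟨Y,Y⟩⟨Y,X⟩(⟨Y,W⟩⟨U,X⟩ + ⟨Y,U⟩⟨W,X⟩) }. -/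

import Mathlib

open scoped RealInnerProductSpace

/-- The Matsumoto metric `F(y) = ⟨y,y⟩ / (√⟨y,y⟩ − ⟨X,y⟩)` associated to the
vector `X` of an inner product space. -/
noncomputable def matsumotoF {V : Type*} [NormedAddCommGroup V] [InnerProductSpace ℝ V]
    (X y : V) : ℝ :=
  ⟪y, y⟫ / (Real.sqrt ⟪y, y⟫ - ⟪X, y⟫)

/-- The fundamental tensor of the Matsumoto metric:
`g_Y(U,W) = (1/2)·∂²/∂s∂t [F²(Y + sU + tW)]` at `s = t = 0`. -/
noncomputable def matsumotoG {V : Type*} [NormedAddCommGroup V] [InnerProductSpace ℝ V]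
    (X Y U W : V) : ℝ :=
  (1 / 2) * deriv (fun s : ℝ =>
    deriv (fun t : ℝ => (matsumotoF X (Y + s • U + t • W)) ^ 2) 0) 0

section Aux

variable {V : Type*} [NormedAddCommGroup V] [InnerProductSpace ℝ V]

private lemma hasDerivAt_A' (p q : V) :
    HasDerivAt (fun s : ℝ => ⟪p + s • q, p + s • q⟫) (2 * ⟪p, q⟫) 0 := by
  have h : (fun s : ℝ => ⟪p + s • q, p + s • q⟫) =
      fun s : ℝ => ⟪p, p⟫ + 2 * ⟪p, q⟫ * s + ⟪q, q⟫ * s ^ 2 := by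
    funext s
    simp [real_inner_add_add_self, real_inner_smul_right, real_inner_smul_left, -inner_self_eq_norm_sq_to_K]
    ring
  rw [h]
  exact (((hasDerivAt_const (0:ℝ) ⟪p,p⟫).add
      ((hasDerivAt_id (0:ℝ)).const_mul (2 * ⟪p,q⟫))).add
      ((hasDerivAt_pow 2 (0:ℝ)).const_mul ⟪q,q⟫)).congr_deriv (by simp)

private lemma hasDerivAt_B' (p q w : V) : HasDerivAt (fun s : ℝ => ⟪p + s • q, w⟫) ⟪q, w⟫ 0 := by
  have h : (fun s : ℝ => ⟪p + s • q, w⟫) = fun s : ℝ => ⟪p, w⟫ + ⟪q, w⟫ * s := by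
    funext s; simp [inner_add_left, real_inner_smul_left]; ring
  rw [h]
  simpa using ((hasDerivAt_id (0:ℝ)).const_mul ⟪q, w⟫).const_add ⟪p, w⟫

private lemma hasDerivAt_C' (x p q : V) : HasDerivAt (fun s : ℝ => ⟪x, p + s • q⟫) ⟪x, q⟫ 0 := by
  have h : (fun s : ℝ => ⟪x, p + s • q⟫) = fun s : ℝ => ⟪x, p⟫ + ⟪x, q⟫ * s := by
    funext s; simp [inner_add_right, real_inner_smul_right]; ring
  rw [h]
  simpa using ((hasDerivAt_id (0:ℝ)).const_mul ⟪x, q⟫).const_add ⟪x, p⟫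

/-- value of the inner `t`-derivative at `t = 0` -/
private noncomputable def innerVal (X p q : V) : ℝ :=
  2 * (⟪p, p⟫ / (Real.sqrt ⟪p, p⟫ - ⟪X, p⟫) *
    ((2 * ⟪p, q⟫ * (Real.sqrt ⟪p, p⟫ - ⟪X, p⟫) -
        ⟪p, p⟫ * (2 * ⟪p, q⟫ / (2 * Real.sqrt ⟪p, p⟫) - ⟪X, q⟫)) /
      (Real.sqrt ⟪p, p⟫ - ⟪X, p⟫) ^ 2))

private lemma hasDerivAt_inner_sq (X p q : V) (hp : (0:ℝ) < ⟪p, p⟫)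
    (hD : Real.sqrt ⟪p, p⟫ - ⟪X, p⟫ ≠ 0) :
    HasDerivAt (fun t : ℝ => (matsumotoF X (p + t • q)) ^ 2) (innerVal X p q) 0 := by
  have hf := hasDerivAt_A' p q
  have hg := hasDerivAt_C' X p q
  have hf0 : (fun s : ℝ => ⟪p + s • q, p + s • q⟫) 0 ≠ 0 := by
    simpa using hp.ne'
  have hs := hf.sqrt hf0
  have hden := hs.sub hg
  have hD0 : (fun t : ℝ => Real.sqrt ⟪p + t • q, p + t • q⟫ - ⟪X, p + t • q⟫) 0 ≠ 0 := by
    simpa using hD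
  have hF := hf.div hden hD0
  have hF2 := hF.pow 2
  have heq : (fun t : ℝ => (matsumotoF X (p + t • q)) ^ 2) =
      fun t : ℝ => (⟪p + t • q, p + t • q⟫ /
        (Real.sqrt ⟪p + t • q, p + t • q⟫ - ⟪X, p + t • q⟫)) ^ 2 := rfl
  rw [heq]
  refine hF2.congr_deriv ?_
  simp only [innerVal, zero_smul, add_zero]
  norm_num
  ring

private lemma denom_pos' (X : V) (hX : ‖X‖ < 1 / 2) (y : V) (hy : y ≠ 0) :
    0 < Real.sqrt ⟪y, y⟫ - ⟪X, y⟫ := by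
  have h1 : Real.sqrt ⟪y, y⟫ = ‖y‖ := by
    rw [real_inner_self_eq_norm_sq, Real.sqrt_sq (norm_nonneg y)]
  have h2 : ⟪X, y⟫ ≤ ‖X‖ * ‖y‖ := real_inner_le_norm X y
  have hy' : 0 < ‖y‖ := norm_pos_iff.mpr hy
  nlinarith [norm_nonneg X]

end Aux


set_option maxHeartbeats 1600000 in
private lemma matsumoto_alg_key (a1 a2 a3 a4 a5 a6 r : ℝ) (hrne : r ≠ 0) (hDne : r - a6 ≠ 0) :
    1 / 2 *
      (2 *
        ((2 * a1 * (r - a6) - r ^ 2 * (2 * a1 / (2 * r) - a4)) / (r - a6) ^ 2 *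
            ((2 * a2 * (r - a6) - r ^ 2 * (2 * a2 / (2 * r) - a5)) / (r - a6) ^ 2) +
          r ^ 2 / (r - a6) *
            (((2 * a3 * (r - a6) + 2 * a2 * (2 * a1 / (2 * r) - a4) -
                    (2 * a1 * (2 * a2 / (2 * r) - a5) +
                      r ^ 2 * ((2 * a3 * (2 * r) - 2 * a2 * (2 * (2 * a1 / (2 * r)))) / (2 * r) ^ 2))) *
                  (r - a6) ^ 2 -
                (2 * a2 * (r - a6) - r ^ 2 * (2 * a2 / (2 * r) - a5)) *
                  (2 * (r - a6) * (2 * a1 / (2 * r) - a4))) /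
              ((r - a6) ^ 2) ^ 2))) =
    ((r - a6) ^ 2)⁻¹ * (4 * a1 * a2 + 2 * r ^ 2 * a3) +
      ((r - a6) ^ 4)⁻¹ *
        (-(4 * r ^ 2 * a1 * a2) + r ^ 2 * r * (a2 * a4 + a1 * a5) + (r ^ 2) ^ 2 * (3 * a4 * a5 - a3) +
            r * a6 * (7 * a1 * a2 + r ^ 2 * a3) -
          4 * r ^ 2 * a6 * (a2 * a4 + a1 * a5)) := by
  field_simp
  ring

set_option maxHeartbeats 400000 in
theorem matsumoto_fundamental_tensor_formula
    {V : Type*} [NormedAddCommGroup V] [InnerProductSpace ℝ V] [FiniteDimensional ℝ V]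
    (X : V) (hX : ‖X‖ < 1 / 2) (Y U W : V) (hY : Y ≠ 0) :
    matsumotoG X Y U W =
      (Real.sqrt ⟪Y, Y⟫ - ⟪X, Y⟫) ^ (-2 : ℤ) *
        (4 * ⟪Y, U⟫ * ⟪Y, W⟫ + 2 * ⟪Y, Y⟫ * ⟪U, W⟫)
      + (Real.sqrt ⟪Y, Y⟫ - ⟪X, Y⟫) ^ (-4 : ℤ) *
        (- 4 * ⟪Y, Y⟫ * ⟪Y, U⟫ * ⟪Y, W⟫
         + ⟪Y, Y⟫ ^ ((3 : ℝ) / 2) * (⟪Y, W⟫ * ⟪U, X⟫ + ⟪Y, U⟫ * ⟪W, X⟫)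
         + ⟪Y, Y⟫ ^ 2 * (3 * ⟪U, X⟫ * ⟪W, X⟫ - ⟪U, W⟫)
         + Real.sqrt ⟪Y, Y⟫ * ⟪Y, X⟫ * (7 * ⟪Y, U⟫ * ⟪Y, W⟫ + ⟪Y, Y⟫ * ⟪U, W⟫)
         - 4 * ⟪Y, Y⟫ * ⟪Y, X⟫ * (⟪Y, W⟫ * ⟪U, X⟫ + ⟪Y, U⟫ * ⟪W, X⟫)) := by
  have hA0 : (0:ℝ) < ⟪Y, Y⟫ := by
    have := norm_pos_iff.mpr hY
    rw [real_inner_self_eq_norm_sq]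
    positivity
  have hD0 : 0 < Real.sqrt ⟪Y, Y⟫ - ⟪X, Y⟫ := denom_pos' X hX Y hY
  have hmap : Continuous (fun s : ℝ => Y + s • U) :=
    continuous_const.add (continuous_id.smul continuous_const)
  have hcA : Continuous (fun s : ℝ => ⟪Y + s • U, Y + s • U⟫) := hmap.inner hmap
  have hcD : Continuous (fun s : ℝ => Real.sqrt ⟪Y + s • U, Y + s • U⟫ - ⟪X, Y + s • U⟫) :=
    (Real.continuous_sqrt.comp hcA).sub (continuous_const.inner hmap)
  have evA : ∀ᶠ s : ℝ in nhds 0, 0 < ⟪Y + s • U, Y + s • U⟫ := by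
    have h0 : (0:ℝ) < (fun s : ℝ => ⟪Y + s • U, Y + s • U⟫) 0 := by simpa using hA0
    exact hcA.continuousAt.eventually_const_lt h0
  have evD : ∀ᶠ s : ℝ in nhds 0,
      0 < Real.sqrt ⟪Y + s • U, Y + s • U⟫ - ⟪X, Y + s • U⟫ := by
    have h0 : (0:ℝ) < (fun s : ℝ => Real.sqrt ⟪Y + s • U, Y + s • U⟫ - ⟪X, Y + s • U⟫) 0 := by
      simpa using hD0
    exact hcD.continuousAt.eventually_const_lt h0
  have hev : (fun s : ℝ => deriv (fun t : ℝ => (matsumotoF X (Y + s • U + t • W)) ^ 2) 0)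
      =ᶠ[nhds 0] fun s : ℝ => innerVal X (Y + s • U) W := by
    filter_upwards [evA, evD] with s h1 h2
    exact (hasDerivAt_inner_sq X (Y + s • U) W h1 h2.ne').deriv
  rw [matsumotoG, hev.deriv_eq]
  -- outer derivative
  have hA := hasDerivAt_A' Y U
  have hB := hasDerivAt_B' Y U W
  have hC := hasDerivAt_C' X Y U
  have hf0 : (fun s : ℝ => ⟪Y + s • U, Y + s • U⟫) 0 ≠ 0 := by simpa using hA0.ne'
  have hr := hA.sqrt hf0
  have hden := hr.sub hC
  have hden0 : (fun s : ℝ => Real.sqrt ⟪Y + s • U, Y + s • U⟫ - ⟪X, Y + s • U⟫) 0 ≠ 0 := by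
    simpa using hD0.ne'
  have hrpos : 0 < Real.sqrt ⟪Y, Y⟫ := Real.sqrt_pos.mpr hA0
  have h2r0 : (fun s : ℝ => 2 * Real.sqrt ⟪Y + s • U, Y + s • U⟫) 0 ≠ 0 := by
    simp only [zero_smul, add_zero]
    positivity
  have hpow0 : (fun s : ℝ =>
      (Real.sqrt ⟪Y + s • U, Y + s • U⟫ - ⟪X, Y + s • U⟫) ^ 2) 0 ≠ 0 := by
    simp only [zero_smul, add_zero]
    positivity
  have h1 := hA.div hden hden0
  have h3 := (hB.const_mul 2).div (hr.const_mul 2) h2r0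
  have h4 := h3.sub_const ⟪X, W⟫
  have h6 := ((hB.const_mul 2).mul hden).sub (hA.mul h4)
  have h8 := h6.div (hden.pow 2) hpow0
  have h9 := (h1.mul h8).const_mul 2
  have hG : HasDerivAt (fun s : ℝ => innerVal X (Y + s • U) W) _ 0 := h9
  rw [hG.deriv]
  simp only [zero_smul, add_zero, pow_one, Nat.cast_ofNat]
  norm_num [-inner_self_eq_norm_sq_to_K]
  -- algebra
  have h32 : ⟪Y, Y⟫ ^ ((3:ℝ)/2) = ⟪Y, Y⟫ * Real.sqrt ⟪Y, Y⟫ := by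
    rw [show ((3:ℝ)/2) = 1 + 1/2 by norm_num, Real.rpow_add hA0, Real.rpow_one,
      ← Real.sqrt_eq_rpow]
  rw [h32, real_inner_comm U X, real_inner_comm W X, real_inner_comm Y X]
  have hDne : Real.sqrt ⟪Y, Y⟫ - ⟪Y, X⟫ ≠ 0 := by
    rw [real_inner_comm X Y]; exact hD0.ne'
  have hrne : Real.sqrt ⟪Y, Y⟫ ≠ 0 := hrpos.ne'
  set r := Real.sqrt ⟪Y, Y⟫ with hrdef
  have hr2 : r ^ 2 = ⟪Y, Y⟫ := Real.sq_sqrt hA0.le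
  rw [← hr2]
  exact matsumoto_alg_key ⟪Y, U⟫ ⟪Y, W⟫ ⟪U, W⟫ ⟪U, X⟫ ⟪W, X⟫ ⟪Y, X⟫ r hrne hDne
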